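/- Let a Polish group G act in a Borel manner on a standard Borel space X, and suppose N is a normal subgroup of G such that the orbit equivalence relation of the restricted N-action admits a Borel selector s : X → X (i.e., s(x) is N-equivalent to x and x E_N y implies s(x) = s(y)). Then, letting Y be the image of s, the map gN ·̂ x = s(g·x) is a well-defined Borel action of the quotient group G/N on Y, and the identity embedding witnesses that the orbit equivalence relation of G on X is Borel reducible to the orbit equivalence relation of G/N on Y. -/

import Mathlib

/-- Modding out a normal subgroup whose orbit equivalence relation has a Borel selector:
the induced map `gN ·̂ x = s(g·x)` is a well-defined Borel action of `G/N` on the image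
`Y` of the selector `s`, and `s` (the identity embedding on classes) witnesses that
`E_G^X` is Borel reducible to `E_{G/N}^Y`. -/
theorem mod_out_smooth_normal_subgroup
    {G : Type*} [Group G] [TopologicalSpace G] [IsTopologicalGroup G] [PolishSpace G]
    [MeasurableSpace G] [BorelSpace G]
    {X : Type*} [MeasurableSpace X] [StandardBorelSpace X]
    [MulAction G X] (hact : Measurable (fun p : G × X => p.1 • p.2))
    (N : Subgroup G) [N.Normal]
    (s : X → X) (hsmeas : Measurable s)
    (hsel₁ : ∀ x : X, ∃ n ∈ N, n • x = s x)
    (hsel₂ : ∀ x y : X, (∃ n ∈ N, n • x = y) → s x = s y) :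
    -- the map `gN ·̂ x = s(g·x)` maps `Y = range s` to itself
    (∀ (g : G) (x : X), x ∈ Set.range s → s (g • x) ∈ Set.range s) ∧
    -- it is well defined on cosets of `N`
    (∀ g g' : G, g⁻¹ * g' ∈ N → ∀ x ∈ Set.range s, s (g • x) = s (g' • x)) ∧
    -- it is an action of the quotient group: identity law
    (∀ x ∈ Set.range s, s ((1 : G) • x) = x) ∧
    -- and compatibility with multiplication
    (∀ g h : G, ∀ x ∈ Set.range s, s (g • s (h • x)) = s ((g * h) • x)) ∧
    -- it is Borel
    Measurable (fun p : G × X => s (p.1 • p.2)) ∧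
    -- and `s` is a Borel reduction of `E_G^X` to the orbit relation of the new action on `Y`
    (∀ x y : X, (∃ g : G, g • x = y) ↔ ∃ g : G, s (g • s x) = s y) := by
  -- basic facts
  have hfix : ∀ x : X, s (s x) = s x := by
    intro x
    obtain ⟨n, hn, h⟩ := hsel₁ x
    exact (hsel₂ x (s x) ⟨n, hn, h⟩).symm
  -- s x = s y implies x and y are N-equivalent
  have hback : ∀ x y : X, s x = s y → ∃ n ∈ N, n • x = y := by
    intro x y h
    obtain ⟨n₁, hn₁, h₁⟩ := hsel₁ x
    obtain ⟨n₂, hn₂, h₂⟩ := hsel₁ y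
    refine ⟨n₂⁻¹ * n₁, mul_mem (inv_mem hn₂) hn₁, ?_⟩
    rw [mul_smul, h₁, h, ← h₂, inv_smul_smul]
  -- conjugation : g • (n • x) = (g n g⁻¹) • (g • x)
  have hconj : ∀ (g n : G) (x : X), g • (n • x) = (g * n * g⁻¹) • (g • x) := by
    intro g n x
    simp [smul_smul, mul_assoc]
  -- equivariance of N-equivalence
  have hequiv : ∀ (g : G) (x y : X), (∃ n ∈ N, n • x = y) →
      ∃ n ∈ N, n • (g • x) = g • y := by
    rintro g x y ⟨n, hn, rfl⟩
    exact ⟨g * n * g⁻¹, Subgroup.Normal.conj_mem ‹N.Normal› n hn g, (hconj g n x).symm⟩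
  have key : ∀ (g : G) (x : X), s (g • s x) = s (g • x) := by
    intro g x
    obtain ⟨n, hn, h⟩ := hsel₁ x
    exact (hsel₂ _ _ (hequiv g x (s x) ⟨n, hn, h⟩)).symm
  refine ⟨fun g x _ => ⟨g • x, rfl⟩, ?_, ?_, ?_, ?_, ?_⟩
  · rintro g g' hgg' x -
    apply hsel₂
    have : g' • x = g • ((g⁻¹ * g') • x) := by simp [smul_smul, mul_assoc]
    rw [this]
    exact hequiv g x _ ⟨g⁻¹ * g', hgg', rfl⟩
  · rintro x ⟨y, rfl⟩
    rw [one_smul, hfix]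
  · intro g h x _
    rw [key g (h • x), hsel₂ (g • (h • x)) ((g * h) • x) ⟨1, one_mem N, by simp [mul_smul]⟩]
  · exact hsmeas.comp hact
  · intro x y
    constructor
    · rintro ⟨g, rfl⟩
      exact ⟨g, key g x⟩
    · rintro ⟨g, hg⟩
      rw [key g x] at hg
      obtain ⟨n, hn, h⟩ := hback _ _ hg
      exact ⟨n * g, by rw [mul_smul, h]⟩
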